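/- Lyapunov exponent of the random Kirchhoff model at the Dirichlet energies (Lemma 3.12): Fix b \ge 1, an integer k \ge 1, \mu := k\pi, q_0 \ge 0, and any sequence (q_n)_{n\ge 1} of reals with |q_n| \le q_0 for all n. Set T(q) := D(b) \cdot S(q) \cdot R_\mu(\mu) and U(n) := T(q_n) \cdots T(q_1). Then lim_{n\to\infty} (1/n) \log \|U(n)\| = (1/2) \log b. -/

import Mathlib

set_option synthInstance.maxHeartbeats 1000000
set_option maxHeartbeats 2000000

/-- The operator norm of a real 2×2 matrix with respect to the Euclidean norm on `ℝ²`. -/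
noncomputable def opNorm (A : Matrix (Fin 2) (Fin 2) ℝ) : ℝ :=
  ‖Matrix.toEuclideanCLM (𝕜 := ℝ) A‖

/-- The dilation matrix `D(b) = diag(√b, 1/√b)`. -/
noncomputable def Dmat (b : ℝ) : Matrix (Fin 2) (Fin 2) ℝ :=
  !![Real.sqrt b, 0; 0, 1 / Real.sqrt b]

/-- The shearing matrix `S(q)`. -/
def Smat (q : ℝ) : Matrix (Fin 2) (Fin 2) ℝ := !![1, 0; q, 1]

/-- The rotation matrix `R_μ(φ)`. -/
noncomputable def Rmat (μ φ : ℝ) : Matrix (Fin 2) (Fin 2) ℝ :=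
  !![Real.cos φ, Real.sin φ / μ; -(μ * Real.sin φ), Real.cos φ]

private lemma opNorm_nonneg (A : Matrix (Fin 2) (Fin 2) ℝ) : 0 ≤ opNorm A := norm_nonneg _

private lemma opNorm_smul (r : ℝ) (A : Matrix (Fin 2) (Fin 2) ℝ) : opNorm (r • A) = |r| * opNorm A := by
  unfold opNorm
  rw [map_smul]
  rw [norm_smul r (Matrix.toEuclideanCLM (𝕜 := ℝ) A), Real.norm_eq_abs]

private lemma opNorm_mul_le (A B : Matrix (Fin 2) (Fin 2) ℝ) : opNorm (A * B) ≤ opNorm A * opNorm B := by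
  unfold opNorm
  rw [map_mul]
  exact norm_mul_le _ _

private lemma apply_eq (A : Matrix (Fin 2) (Fin 2) ℝ) (x : EuclideanSpace ℝ (Fin 2)) (i : Fin 2) :
    (Matrix.toEuclideanCLM (𝕜 := ℝ) A x) i = A i 0 * x 0 + A i 1 * x 1 := by
  have h2 : (Matrix.toEuclideanCLM (𝕜 := ℝ) A x) i = (Matrix.toLin' A (WithLp.equiv _ _ x)) i := by
    exact congrFun (Matrix.ofLp_toEuclideanCLM (𝕜 := ℝ) A x) i
  rw [h2]
  simp [Matrix.toLin'_apply, Matrix.mulVec, dotProduct, Fin.sum_univ_two]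

private lemma norm_sq (x : EuclideanSpace ℝ (Fin 2)) : ‖x‖ ^ 2 = x 0 ^ 2 + x 1 ^ 2 := by
  rw [EuclideanSpace.norm_eq]
  rw [Real.sq_sqrt (by positivity)]
  simp [Fin.sum_univ_two, sq_abs]

private lemma abs_apply_le_norm (y : EuclideanSpace ℝ (Fin 2)) (i : Fin 2) : |y i| ≤ ‖y‖ := by
  have h := norm_sq y
  have hn := norm_nonneg y
  fin_cases i
  · show |y 0| ≤ ‖y‖
    nlinarith [sq_nonneg (y 1), sq_abs (y 0), abs_nonneg (y 0)]
  · show |y 1| ≤ ‖y‖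
    nlinarith [sq_nonneg (y 0), sq_abs (y 1), abs_nonneg (y 1)]

private lemma entry_le_opNorm (A : Matrix (Fin 2) (Fin 2) ℝ) (i j : Fin 2) : |A i j| ≤ opNorm A := by
  set x : EuclideanSpace ℝ (Fin 2) := EuclideanSpace.single j (1:ℝ) with hx
  have hxn : ‖x‖ = 1 := by rw [hx, EuclideanSpace.norm_single, norm_one]
  have hxj : ∀ j', x j' = if j' = j then 1 else 0 := by
    intro j'; rw [hx, EuclideanSpace.single_apply]
  have hAx : (Matrix.toEuclideanCLM (𝕜 := ℝ) A x) i = A i j := by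
    rw [apply_eq, hxj 0, hxj 1]
    fin_cases j <;> simp
  calc |A i j| = |(Matrix.toEuclideanCLM (𝕜 := ℝ) A x) i| := by rw [hAx]
    _ ≤ ‖Matrix.toEuclideanCLM (𝕜 := ℝ) A x‖ := abs_apply_le_norm _ i
    _ ≤ opNorm A * ‖x‖ := ContinuousLinearMap.le_opNorm _ x
    _ = opNorm A := by rw [hxn, mul_one]

private lemma opNorm_tri_le (p r s : ℝ) : opNorm !![p,0;r,s] ≤ |p| + |r| + |s| := by
  have hC : (0:ℝ) ≤ |p| + |r| + |s| := by positivity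
  refine ContinuousLinearMap.opNorm_le_bound _ hC ?_
  intro x
  set y := Matrix.toEuclideanCLM (𝕜 := ℝ) !![p,0;r,s] x with hy
  have hy0 : y 0 = p * x 0 := by rw [hy, apply_eq]; simp
  have hy1 : y 1 = r * x 0 + s * x 1 := by rw [hy, apply_eq]; simp
  have h1 : ‖y‖^2 = y 0^2 + y 1^2 := norm_sq y
  have hx0 : |x 0| ≤ ‖x‖ := abs_apply_le_norm x 0
  have hx1 : |x 1| ≤ ‖x‖ := abs_apply_le_norm x 1
  have hb0 : |y 0| ≤ |p| * ‖x‖ := by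
    rw [hy0, abs_mul]; exact mul_le_mul_of_nonneg_left hx0 (abs_nonneg p)
  have hb1 : |y 1| ≤ (|r| + |s|) * ‖x‖ := by
    rw [hy1]
    calc |r * x 0 + s * x 1| ≤ |r * x 0| + |s * x 1| := abs_add_le _ _
      _ = |r| * |x 0| + |s| * |x 1| := by rw [abs_mul, abs_mul]
      _ ≤ |r| * ‖x‖ + |s| * ‖x‖ := by
          nlinarith [abs_nonneg r, abs_nonneg s]
      _ = (|r| + |s|) * ‖x‖ := by ring
  have hsq : ‖y‖^2 ≤ ((|p| + |r| + |s|) * ‖x‖)^2 := by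
    nlinarith [sq_abs (y 0), sq_abs (y 1), abs_nonneg (y 0), abs_nonneg (y 1),
      norm_nonneg x, abs_nonneg p, abs_nonneg r, abs_nonneg s,
      mul_nonneg (mul_nonneg (abs_nonneg p) (add_nonneg (abs_nonneg r) (abs_nonneg s))) (mul_nonneg (norm_nonneg x) (norm_nonneg x))]
  nlinarith [hsq, norm_nonneg y, mul_nonneg hC (norm_nonneg x)]


/-- Lyapunov exponent of the random Kirchhoff model at the Dirichlet energies
(Lemma 3.12): for `b ≥ 1`, `μ = kπ` with `k ≥ 1` an integer, and any uniformly bounded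
sequence `(q_n)_{n ≥ 1}`, the products `U(n) = T(q_n) ⋯ T(q_1)` of the transfer matrices
`T(q) = D(b) S(q) R_μ(μ)` satisfy `(1/n) log ‖U(n)‖ → (1/2) log b`. -/
theorem rkm_dirichlet_lyapunov
    (b : ℝ) (hb : 1 ≤ b) (k : ℕ) (hk : 1 ≤ k) (μ : ℝ) (hμ : μ = k * Real.pi)
    (q0 : ℝ) (hq0 : 0 ≤ q0) (q : ℕ → ℝ) (hq : ∀ n : ℕ, |q n| ≤ q0)
    (U : ℕ → Matrix (Fin 2) (Fin 2) ℝ)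
    (hU0 : U 0 = 1)
    (hU : ∀ n : ℕ, U (n + 1) = Dmat b * Smat (q (n + 1)) * Rmat μ μ * U n) :
    Filter.Tendsto (fun n : ℕ => (1 / (n : ℝ)) * Real.log (opNorm (U n)))
      Filter.atTop (nhds ((1 / 2) * Real.log b)) := by
  set a : ℝ := Real.sqrt b with ha
  have ha1 : 1 ≤ a := by
    rw [ha, show (1:ℝ) = Real.sqrt 1 from (Real.sqrt_one).symm]
    exact Real.sqrt_le_sqrt hb
  have ha0 : 0 < a := lt_of_lt_of_le one_pos ha1
  -- rotation is ±1
  have hcos : Real.cos μ = (-1 : ℝ) ^ k := by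
    have := Real.cos_nat_mul_pi_sub 0 k
    simpa [hμ] using this
  have hsin : Real.sin μ = 0 := by rw [hμ]; exact Real.sin_nat_mul_pi k
  have hR : Rmat μ μ = ((-1 : ℝ) ^ k) • (1 : Matrix (Fin 2) (Fin 2) ℝ) := by
    ext i j
    fin_cases i <;> fin_cases j <;>
      simp [Rmat, hcos, hsin, Matrix.one_apply]
  -- the lower triangular product
  set c : ℕ → ℝ := fun n => Nat.rec 0 (fun m cm => q (m+1) * a⁻¹ * a ^ m + a⁻¹ * cm) n with hc
  have hc0 : c 0 = 0 := rfl
  have hcs : ∀ n, c (n+1) = q (n+1) * a⁻¹ * a ^ n + a⁻¹ * c n := fun n => rfl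
  have key : ∀ n, U n = ((-1 : ℝ) ^ k) ^ n • !![a ^ n, 0; c n, (a⁻¹) ^ n] := by
    intro n
    induction n with
    | zero => simp [hU0, hc0, Matrix.one_fin_two]
    | succ n ih =>
      rw [hU n, ih, hR, Matrix.mul_smul, Matrix.mul_smul, Matrix.mul_one, Matrix.smul_mul,
        smul_smul]
      have hpow : ((-1:ℝ)^k)^n * (-1:ℝ)^k = ((-1:ℝ)^k)^(n+1) := by ring
      rw [hpow]
      have hDS : Dmat b * Smat (q (n+1)) = !![a, 0; q (n+1) * a⁻¹, a⁻¹] := by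
        ext i j
        fin_cases i <;> fin_cases j <;>
          simp [Dmat, Smat, Matrix.mul_apply, Fin.sum_univ_two, ← ha, one_div, mul_comm]
      congr 1
      rw [hDS, Matrix.mul_fin_two, hcs n,
        show a * a ^ n + 0 * c n = a ^ (n+1) by ring,
        show a * 0 + 0 * a⁻¹ ^ n = (0:ℝ) by ring,
        show q (n+1) * a⁻¹ * 0 + a⁻¹ * a⁻¹ ^ n = a⁻¹ ^ (n+1) by ring]
  have hcbound : ∀ n, |c n| ≤ n * q0 * a ^ n := by
    intro n
    induction n with
    | zero => simp [hc0]
    | succ n ih =>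
      have hinv : a⁻¹ ≤ 1 := by
        rw [inv_le_one_iff₀]; right; exact ha1
      have hinv0 : (0:ℝ) ≤ a⁻¹ := by positivity
      have hpow1 : (1:ℝ) ≤ a ^ n := one_le_pow₀ ha1
      have hpows : a ^ n ≤ a ^ (n+1) := pow_le_pow_right₀ ha1 (Nat.le_succ n)
      have step : |c (n+1)| ≤ q0 * (a⁻¹ * a ^ n) + a⁻¹ * |c n| := by
        rw [hcs n]
        calc |q (n+1) * a⁻¹ * a ^ n + a⁻¹ * c n|
            ≤ |q (n+1) * a⁻¹ * a ^ n| + |a⁻¹ * c n| := abs_add_le _ _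
          _ = |q (n+1)| * (a⁻¹ * a ^ n) + a⁻¹ * |c n| := by
              rw [abs_mul, abs_mul, abs_mul, abs_of_nonneg hinv0,
                abs_of_nonneg (pow_nonneg ha0.le n)]
              ring
          _ ≤ q0 * (a⁻¹ * a ^ n) + a⁻¹ * |c n| := by
              have := hq (n+1)
              nlinarith [mul_nonneg hinv0 (pow_nonneg ha0.le n)]
      have hkey : a⁻¹ * a ^ n ≤ a ^ (n+1) := by
        calc a⁻¹ * a ^ n ≤ 1 * a ^ n := by
              exact mul_le_mul_of_nonneg_right hinv (pow_nonneg ha0.le n)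
          _ = a ^ n := one_mul _
          _ ≤ a ^ (n+1) := hpows
      have h2 : a⁻¹ * |c n| ≤ (n : ℝ) * q0 * a ^ (n+1) := by
        calc a⁻¹ * |c n| ≤ 1 * |c n| := mul_le_mul_of_nonneg_right hinv (abs_nonneg _)
          _ = |c n| := one_mul _
          _ ≤ (n:ℝ) * q0 * a ^ n := ih
          _ ≤ (n:ℝ) * q0 * a ^ (n+1) := by
              have : (0:ℝ) ≤ (n:ℝ) * q0 := by positivity
              nlinarith
      push_cast
      nlinarith [mul_le_mul_of_nonneg_left hkey hq0]
  -- norm bounds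
  have hNeq : ∀ n, opNorm (U n) = opNorm !![a ^ n, 0; c n, (a⁻¹) ^ n] := by
    intro n
    rw [key n, opNorm_smul]
    have : |((-1:ℝ) ^ k) ^ n| = 1 := by
      rw [abs_pow, abs_pow, abs_neg, abs_one, one_pow, one_pow]
    rw [this, one_mul]
  have hlow : ∀ n, a ^ n ≤ opNorm (U n) := by
    intro n
    have := entry_le_opNorm !![a ^ n, 0; c n, (a⁻¹) ^ n] 0 0
    rw [hNeq n]
    simpa [abs_of_nonneg (pow_nonneg ha0.le n)] using this
  have hup : ∀ n, opNorm (U n) ≤ a ^ n * (2 + n * q0) := by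
    intro n
    rw [hNeq n]
    refine (opNorm_tri_le _ _ _).trans ?_
    have h1 : |a ^ n| = a ^ n := abs_of_nonneg (pow_nonneg ha0.le n)
    have h2 : |(a⁻¹) ^ n| ≤ a ^ n := by
      rw [abs_of_nonneg (pow_nonneg (by positivity) n)]
      calc (a⁻¹) ^ n ≤ 1 ^ n := pow_le_pow_left₀ (by positivity)
            (by rw [inv_le_one_iff₀]; right; exact ha1) n
        _ = 1 := one_pow n
        _ ≤ a ^ n := one_le_pow₀ ha1
    have h3 := hcbound n
    rw [h1]
    nlinarith [pow_nonneg ha0.le n]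
  -- positivity of the norm
  have hpos : ∀ n, 0 < opNorm (U n) := fun n =>
    lt_of_lt_of_le (pow_pos ha0 n) (hlow n)
  -- log a = (1/2) log b
  have hloga : Real.log a = (1/2) * Real.log b := by
    rw [ha, Real.log_sqrt (le_trans zero_le_one hb)]; ring
  -- squeeze
  have hlowlog : ∀ n : ℕ, 1 ≤ n → (1/2) * Real.log b ≤ (1 / (n:ℝ)) * Real.log (opNorm (U n)) := by
    intro n hn
    have hn0 : (0:ℝ) < (n:ℝ) := by exact_mod_cast hn
    have : (n:ℝ) * Real.log a ≤ Real.log (opNorm (U n)) := by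
      rw [← Real.log_pow]
      exact Real.log_le_log (pow_pos ha0 n) (hlow n)
    rw [← hloga]
    calc Real.log a = (1/(n:ℝ)) * ((n:ℝ) * Real.log a) := by field_simp
      _ ≤ (1/(n:ℝ)) * Real.log (opNorm (U n)) :=
          mul_le_mul_of_nonneg_left this (by positivity)
  have huplog : ∀ n : ℕ, 1 ≤ n →
      (1 / (n:ℝ)) * Real.log (opNorm (U n)) ≤
        (1/2) * Real.log b + (1/(n:ℝ)) * Real.log (2 + n * q0) := by
    intro n hn
    have hn0 : (0:ℝ) < (n:ℝ) := by exact_mod_cast hn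
    have h2pos : (0:ℝ) < 2 + n * q0 := by positivity
    have hlog : Real.log (opNorm (U n)) ≤ (n:ℝ) * Real.log a + Real.log (2 + n * q0) := by
      have := Real.log_le_log (hpos n) (hup n)
      rwa [Real.log_mul (by positivity) (ne_of_gt h2pos), Real.log_pow] at this
    rw [← hloga]
    have : (1/(n:ℝ)) * Real.log (opNorm (U n)) ≤ (1/(n:ℝ)) * ((n:ℝ) * Real.log a + Real.log (2 + n * q0)) := by
      exact mul_le_mul_of_nonneg_left hlog (by positivity)
    calc (1/(n:ℝ)) * Real.log (opNorm (U n))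
        ≤ (1/(n:ℝ)) * ((n:ℝ) * Real.log a + Real.log (2 + n * q0)) := this
      _ = Real.log a + (1/(n:ℝ)) * Real.log (2 + n * q0) := by field_simp
  -- the error term tends to zero
  have herr : Filter.Tendsto (fun n : ℕ => (1/(n:ℝ)) * Real.log (2 + n * q0))
      Filter.atTop (nhds 0) := by
    have hbig : Filter.Tendsto (fun n : ℕ => Real.log (n:ℝ) / (n:ℝ) + Real.log (2 + q0) / (n:ℝ))
        Filter.atTop (nhds 0) := by
      have t1 : Filter.Tendsto (fun n : ℕ => Real.log (n:ℝ) / (n:ℝ)) Filter.atTop (nhds 0) := by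
        have := Real.isLittleO_log_id_atTop.tendsto_div_nhds_zero
        exact this.comp tendsto_natCast_atTop_atTop
      have t2 := tendsto_const_div_atTop_nhds_zero_nat (Real.log (2 + q0))
      simpa using t1.add t2
    refine tendsto_of_tendsto_of_tendsto_of_le_of_le' tendsto_const_nhds hbig ?_ ?_
    · filter_upwards [Filter.eventually_ge_atTop 1] with n hn
      have hn0 : (0:ℝ) < (n:ℝ) := by exact_mod_cast hn
      have : (1:ℝ) ≤ 2 + n * q0 := by nlinarith [mul_nonneg (le_of_lt hn0) hq0]
      have := Real.log_nonneg this
      positivity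
    · filter_upwards [Filter.eventually_ge_atTop 1] with n hn
      have hn0 : (0:ℝ) < (n:ℝ) := by exact_mod_cast hn
      have hn1 : (1:ℝ) ≤ (n:ℝ) := by exact_mod_cast hn
      have hle : (2:ℝ) + n * q0 ≤ (n:ℝ) * (2 + q0) := by nlinarith [mul_nonneg (le_of_lt hn0) hq0]
      have hlg : Real.log (2 + n * q0) ≤ Real.log (n:ℝ) + Real.log (2 + q0) := by
        rw [← Real.log_mul (ne_of_gt hn0) (by positivity)]
        exact Real.log_le_log (by positivity) hle
      calc (1/(n:ℝ)) * Real.log (2 + n * q0)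
          ≤ (1/(n:ℝ)) * (Real.log (n:ℝ) + Real.log (2 + q0)) :=
            mul_le_mul_of_nonneg_left hlg (by positivity)
        _ = Real.log (n:ℝ) / (n:ℝ) + Real.log (2 + q0) / (n:ℝ) := by ring
  -- final squeeze
  have hupper : Filter.Tendsto (fun n : ℕ => (1/2) * Real.log b + (1/(n:ℝ)) * Real.log (2 + n * q0))
      Filter.atTop (nhds ((1/2) * Real.log b)) := by
    have := (tendsto_const_nhds (x := (1/2) * Real.log b) (f := Filter.atTop (α := ℕ))).add herr
    simpa using this
  refine tendsto_of_tendsto_of_tendsto_of_le_of_le' tendsto_const_nhds hupper ?_ ?_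
  · filter_upwards [Filter.eventually_ge_atTop 1] with n hn
    exact hlowlog n hn
  · filter_upwards [Filter.eventually_ge_atTop 1] with n hn
    exact huplog n hn
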